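/- Let n ≥ 2 and 1 ≤ k ≤ n. If λ = (λ₁,…,λₙ) ∈ Γ_k, then for every index i ∈ {1,…,n} the (k−1)-th elementary symmetric function of the (n−1)-tuple obtained from λ by deleting the i-th entry is strictly positive: σ_{k−1}(λ₁,…,λ̂ᵢ,…,λₙ) > 0. -/

import Mathlib

/-- The `k`-th elementary symmetric function of `l = (l 0, …, l (n-1)) ∈ ℝⁿ`. -/
noncomputable def esymm (n k : ℕ) (l : Fin n → ℝ) : ℝ :=
  ∑ s ∈ Finset.powersetCard k (Finset.univ : Finset (Fin n)), ∏ i ∈ s, l i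

/-- The `k`-th elementary symmetric function of the `(n-1)`-tuple obtained from
`l ∈ ℝⁿ` by deleting the `i`-th entry. -/
noncomputable def esymmDel (n k : ℕ) (l : Fin n → ℝ) (i : Fin n) : ℝ :=
  ∑ s ∈ Finset.powersetCard k ((Finset.univ : Finset (Fin n)).erase i), ∏ j ∈ s, l j

/-- The Gårding cone `Γ_k ⊆ ℝⁿ`: the connected component of `{λ : σ_k(λ) > 0}`
containing the vector `(1,…,1)`. -/
noncomputable def gardingCone (n k : ℕ) : Set (Fin n → ℝ) :=
  connectedComponentIn {l : Fin n → ℝ | 0 < esymm n k l} (fun _ => 1)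

open Finset Polynomial

lemma esymm_zero (n : ℕ) (l : Fin n → ℝ) : esymm n 0 l = 1 := by
  simp [esymm]

lemma esymm_one (n : ℕ) (l : Fin n → ℝ) : esymm n 1 l = ∑ i, l i := by
  simp [esymm, Finset.powersetCard_one, Finset.sum_map]

lemma esymm_const_one (n j : ℕ) (hj : j ≤ n) : esymm n j (fun _ => 1) = (n.choose j : ℝ) := by
  simp [esymm, Finset.card_powersetCard]

lemma continuous_esymm (n j : ℕ) : Continuous (esymm n j) := by
  unfold esymm
  exact continuous_finset_sum _ fun s _ => continuous_finset_prod _ fun i _ => continuous_apply i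

lemma card_filter_superset {n : ℕ} (j m : ℕ) (u : Finset (Fin n)) (hu : u.card = m)
    (hmj : m ≤ j) :
    (((Finset.univ : Finset (Fin n)).powersetCard j).filter (fun s => u ⊆ s)).card
      = (n - m).choose (j - m) := by
  have hcard : #((Finset.univ : Finset (Fin n)) \ u) = n - m := by
    rw [Finset.card_sdiff_of_subset (Finset.subset_univ u), hu, Finset.card_univ, Fintype.card_fin]
  rw [← hcard, ← Finset.card_powersetCard (j - m) (Finset.univ \ u)]
  apply Finset.card_bij' (fun s _ => s \ u) (fun v _ => v ∪ u)
  · intro s hs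
    simp only [Finset.mem_filter, Finset.mem_powersetCard] at hs
    simp only [Finset.mem_powersetCard]
    exact ⟨Finset.sdiff_subset_sdiff hs.1.1 le_rfl,
      by rw [Finset.card_sdiff_of_subset hs.2, hs.1.2, hu]⟩
  · intro v hv
    simp only [Finset.mem_powersetCard] at hv
    have hdisj : Disjoint v u := Finset.disjoint_of_subset_left hv.1 Finset.sdiff_disjoint
    simp only [Finset.mem_filter, Finset.mem_powersetCard]
    refine ⟨⟨Finset.subset_univ _, ?_⟩, Finset.subset_union_right⟩
    rw [Finset.card_union_of_disjoint hdisj, hv.2, hu]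
    omega
  · intro s hs
    simp only [Finset.mem_filter] at hs
    exact Finset.sdiff_union_of_subset hs.2
  · intro v hv
    simp only [Finset.mem_powersetCard] at hv
    exact Finset.union_sdiff_cancel_right
      (Finset.disjoint_of_subset_left hv.1 Finset.sdiff_disjoint)

lemma esymm_affine (n j : ℕ) (hj : j ≤ n) (a b : ℝ) (l : Fin n → ℝ) :
    esymm n j (fun i => a * l i + b)
      = ∑ m ∈ Finset.range (j + 1),
          ((n - m).choose (j - m) : ℝ) * a ^ m * b ^ (j - m) * esymm n m l := by
  have key : ∀ s ∈ (Finset.univ : Finset (Fin n)).powersetCard j,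
      ∏ i ∈ s, (a * l i + b)
        = ∑ t ∈ s.powerset, a ^ t.card * (∏ i ∈ t, l i) * b ^ (j - t.card) := by
    intro s hs
    rw [Finset.mem_powersetCard] at hs
    rw [Finset.prod_add]
    refine Finset.sum_congr rfl fun t ht => ?_
    rw [Finset.mem_powerset] at ht
    rw [Finset.prod_const, Finset.card_sdiff_of_subset ht, hs.2, Finset.prod_mul_distrib,
      Finset.prod_const]
  rw [esymm, Finset.sum_congr rfl key]
  rw [Finset.sum_comm' (t' := (Finset.univ : Finset (Fin n)).powerset)
    (s' := fun t => ((Finset.univ : Finset (Fin n)).powersetCard j).filter (fun s => t ⊆ s))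
    (fun s t => by simp [Finset.mem_filter, and_comm])]
  have step : ∀ t ∈ (Finset.univ : Finset (Fin n)).powerset,
      (∑ _s ∈ ((Finset.univ : Finset (Fin n)).powersetCard j).filter (fun s => t ⊆ s),
        a ^ t.card * (∏ i ∈ t, l i) * b ^ (j - t.card))
      = (if t.card ≤ j then (((n - t.card).choose (j - t.card) : ℕ) : ℝ) else 0)
          * (a ^ t.card * (∏ i ∈ t, l i) * b ^ (j - t.card)) := by
    intro t _
    rw [Finset.sum_const, nsmul_eq_mul]
    congr 1
    by_cases h : t.card ≤ j
    · rw [if_pos h, card_filter_superset j t.card t rfl h]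
    · rw [if_neg h]
      norm_cast
      rw [Finset.card_eq_zero]
      apply Finset.filter_eq_empty_iff.mpr
      intro s hs
      rw [Finset.mem_powersetCard] at hs
      intro hts
      exact h (hs.2 ▸ Finset.card_le_card hts)
  rw [Finset.sum_congr rfl step]
  rw [Finset.sum_powerset]
  rw [Finset.card_univ, Fintype.card_fin]
  rw [← Finset.sum_subset (Finset.range_subset_range.mpr (by omega : j + 1 ≤ n + 1))
    (fun m _ hm => ?_)]
  · refine Finset.sum_congr rfl fun m hm => ?_
    rw [Finset.mem_range] at hm
    have hmj : m ≤ j := by omega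
    rw [esymm, Finset.mul_sum]
    refine Finset.sum_congr rfl fun t ht => ?_
    rw [Finset.mem_powersetCard] at ht
    rw [ht.2, if_pos hmj]
    ring
  · -- m in range (n+1), not in range (j+1): each inner term vanishes
    rw [Finset.mem_range] at hm
    have : ¬ m ≤ j := by simp at hm ⊢; omega
    apply Finset.sum_eq_zero
    intro t ht
    rw [Finset.mem_powersetCard] at ht
    rw [ht.2, if_neg this, zero_mul]

lemma coeff_cons (a : ℝ) (q : ℝ[X]) (m : ℕ) :
    ((X + C a) * q).coeff m = (if m = 0 then 0 else q.coeff (m - 1)) + a * q.coeff m := by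
  rw [add_mul]
  match m with
  | 0 => simp [mul_coeff_zero]
  | m + 1 => simp [coeff_X_mul, coeff_C_mul]

lemma coeff_prod_X_add_C_nonneg (s : Multiset ℝ) (hs : ∀ a ∈ s, 0 < a) (m : ℕ) :
    0 ≤ ((s.map fun a => X + C a).prod).coeff m := by
  induction s using Multiset.induction_on generalizing m with
  | empty =>
    simp only [Multiset.map_zero, Multiset.prod_zero, coeff_one]
    positivity
  | cons a s ih =>
    have ha : 0 < a := hs a (Multiset.mem_cons_self a s)
    have hs' : ∀ b ∈ s, 0 < b := fun b hb => hs b (Multiset.mem_cons_of_mem hb)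
    rw [Multiset.map_cons, Multiset.prod_cons, coeff_cons]
    have h1 : (0:ℝ) ≤ (if m = 0 then 0 else ((s.map fun a => X + C a).prod).coeff (m-1)) := by
      split
      · rfl
      · exact ih hs' _
    have h2 := ih hs' m
    positivity

lemma coeff_prod_X_add_C_pos (s : Multiset ℝ) (hs : ∀ a ∈ s, 0 < a) (m : ℕ)
    (hm : m ≤ Multiset.card s) :
    0 < ((s.map fun a => X + C a).prod).coeff m := by
  induction s using Multiset.induction_on generalizing m with
  | empty =>
    simp only [Multiset.card_zero, Nat.le_zero] at hm
    subst hm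
    simp only [Multiset.map_zero, Multiset.prod_zero, coeff_one, if_pos rfl]
    norm_num
  | cons a s ih =>
    have ha : 0 < a := hs a (Multiset.mem_cons_self a s)
    have hs' : ∀ b ∈ s, 0 < b := fun b hb => hs b (Multiset.mem_cons_of_mem hb)
    rw [Multiset.map_cons, Multiset.prod_cons, coeff_cons]
    rw [Multiset.card_cons] at hm
    match m with
    | 0 =>
      rw [if_pos rfl, zero_add]
      exact mul_pos ha (ih hs' 0 (Nat.zero_le _))
    | m + 1 =>
      have h1 : 0 < ((s.map fun a => X + C a).prod).coeff m := ih hs' m (by omega)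
      have h2 : 0 ≤ ((s.map fun a => X + C a).prod).coeff (m+1) :=
        coeff_prod_X_add_C_nonneg s hs' (m+1)
      simp only [Nat.add_sub_cancel, if_neg (Nat.succ_ne_zero m)]
      nlinarith

lemma card_roots_iterate_derivative (q : ℝ[X]) (m : ℕ) :
    Multiset.card q.roots ≤ Multiset.card ((derivative^[m]) q).roots + m := by
  induction m with
  | zero => simp
  | succ m ih =>
    refine ih.trans ?_
    rw [Function.iterate_succ_apply']
    have := Polynomial.card_roots_le_derivative ((derivative^[m]) q)
    omega

theorem esymm_pos_of_nonneg (n k : ℕ) (hk1 : 1 ≤ k) (hkn : k ≤ n) (l : Fin n → ℝ)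
    (h0 : ∀ j, j ≤ k → 0 ≤ esymm n j l) (hks : 0 < esymm n k l) :
    ∀ j, j ≤ k → 0 < esymm n j l := by
  classical
  set P : ℝ[X] := ∏ i : Fin n, (X + C (l i)) with hP
  have hPmonic : P.Monic := monic_prod_of_monic _ _ fun i _ => monic_X_add_C (l i)
  have hPdeg : P.natDegree = n := by
    rw [hP, natDegree_prod_of_monic _ _ fun i _ => monic_X_add_C (l i)]
    simp [natDegree_X_add_C]
  have hPcoeff : ∀ j, j ≤ n → P.coeff (n - j) = esymm n j l := by
    intro j hj
    have h1 : n - j ≤ #(Finset.univ : Finset (Fin n)) := by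
      rw [Finset.card_univ, Fintype.card_fin]; omega
    rw [hP, Finset.prod_X_add_C_coeff _ l h1, esymm]
    congr 2
    rw [Finset.card_univ, Fintype.card_fin]
    omega
  have hPsplits : P.Splits := by
    apply Splits.prod
    intro i _
    have : X + C (l i) = X - C (-(l i)) := by rw [map_neg, sub_neg_eq_add]
    rw [this]
    exact Splits.X_sub_C _
  have hProots : Multiset.card P.roots = n := by
    rw [← hPdeg]
    exact (splits_iff_card_roots).mp hPsplits
  set p : ℝ[X] := (derivative^[n - k]) P with hp
  -- coefficient identity for p
  have hpcoeff : ∀ m, m ≤ k →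
      p.coeff m = ((m + (n - k)).descFactorial (n - k) : ℝ) * esymm n (k - m) l := by
    intro m hm
    rw [hp, Polynomial.coeff_iterate_derivative, nsmul_eq_mul]
    congr 1
    have : m + (n - k) = n - (k - m) := by omega
    rw [this, hPcoeff (k - m) (by omega)]
  have hdesc : ∀ m : ℕ, (0:ℝ) < ((m + (n - k)).descFactorial (n - k) : ℝ) := by
    intro m
    have : 0 < (m + (n - k)).descFactorial (n - k) :=
      Nat.pos_of_ne_zero (by
        intro h
        have := Nat.descFactorial_eq_zero_iff_lt.mp h
        omega)
    exact_mod_cast this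
  have hpdeg : p.natDegree ≤ k := by
    have h := natDegree_iterate_derivative P (n - k)
    rw [← hp, hPdeg] at h
    omega
  have hcard : Multiset.card p.roots = k ∧ p.natDegree = k := by
    have h1 := card_roots_iterate_derivative P (n - k)
    have h2 := Polynomial.card_roots' p
    rw [hProots, ← hp] at h1
    constructor <;> omega
  have hpne : p ≠ 0 := by
    intro h
    have := hcard.1
    rw [h] at this
    simp at this
    omega
  have hcoeff0 : 0 < p.coeff 0 := by
    rw [hpcoeff 0 (by omega)]
    exact mul_pos (hdesc 0) (by simpa using hks)
  have hcoeffnn : ∀ m, 0 ≤ p.coeff m := by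
    intro m
    by_cases hm : m ≤ k
    · rw [hpcoeff m hm]
      exact mul_le_mul_of_nonneg_left (h0 (k - m) (by omega)) (hdesc m).le |>.trans_eq' (by ring_nf)
    · rw [coeff_eq_zero_of_natDegree_lt (by omega)]
  -- all roots of p are negative
  have hroots_neg : ∀ r ∈ p.roots, r < 0 := by
    intro r hr
    by_contra hrpos
    push_neg at hrpos
    have heval : p.eval r = 0 := (Polynomial.mem_roots'.mp hr).2
    have : 0 < p.eval r := by
      rw [Polynomial.eval_eq_sum_range]
      apply Finset.sum_pos'
      · intro i _
        exact mul_nonneg (hcoeffnn i) (pow_nonneg hrpos i)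
      · exact ⟨0, Finset.mem_range.mpr (Nat.succ_pos _), by simpa using hcoeff0⟩
    exact this.ne' heval
  -- factor p over its roots
  have hpsplits : p.Splits :=
    splits_iff_card_roots.mpr (hcard.1.trans hcard.2.symm)
  have hfact := hpsplits.eq_prod_roots
  have hlc : 0 < p.leadingCoeff := by
    rw [← Polynomial.coeff_natDegree, hcard.2, hpcoeff k le_rfl]
    simpa [esymm_zero] using mul_pos (hdesc k) (by norm_num : (0:ℝ) < 1)
  set s : Multiset ℝ := p.roots.map (fun r => -r) with hs
  have hs_pos : ∀ a ∈ s, 0 < a := by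
    intro a ha
    rw [hs] at ha
    obtain ⟨r, hr, rfl⟩ := Multiset.mem_map.mp ha
    linarith [hroots_neg r hr]
  have hs_card : Multiset.card s = k := by
    rw [hs, Multiset.card_map, hcard.1]
  have hfact2 : p = C p.leadingCoeff * ((s.map fun a => X + C a).prod) := by
    rw [hs, Multiset.map_map]
    convert hfact using 3
    ext r
    simp [sub_eq_add_neg]
  intro j hj
  have h1 : p.coeff (k - j) = ((((k-j) + (n - k)).descFactorial (n - k)) : ℝ) * esymm n j l := by
    have := hpcoeff (k - j) (by omega)
    rwa [show k - (k - j) = j by omega] at this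
  have h2 : 0 < p.coeff (k - j) := by
    rw [hfact2, coeff_C_mul]
    exact mul_pos hlc (coeff_prod_X_add_C_pos s hs_pos (k - j) (by omega))
  rw [h1] at h2
  have hd := hdesc (k - j)
  nlinarith

/-- the set T = {σ_1 > 0, …, σ_k > 0} -/
def Tset (n k : ℕ) : Set (Fin n → ℝ) := {l | ∀ j, 1 ≤ j → j ≤ k → 0 < esymm n j l}

lemma one_mem_Tset (n k : ℕ) (hkn : k ≤ n) : (fun _ => (1:ℝ)) ∈ Tset n k := by
  intro j hj1 hjk
  rw [esymm_const_one n j (hjk.trans hkn)]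
  exact_mod_cast Nat.choose_pos (hjk.trans hkn)

lemma isOpen_Tset (n k : ℕ) : IsOpen (Tset n k) := by
  have : Tset n k = ⋂ j ∈ Finset.Icc 1 k, {l : Fin n → ℝ | 0 < esymm n j l} := by
    ext l
    simp only [Tset, Set.mem_setOf_eq, Set.mem_iInter, Finset.mem_Icc]
    exact ⟨fun h j hj => h j hj.1 hj.2, fun h j h1 h2 => h j ⟨h1, h2⟩⟩
  rw [this]
  exact isOpen_biInter_finset fun j _ => isOpen_lt continuous_const (continuous_esymm n j)

lemma segment_subset_Tset (n k : ℕ) (hk1 : 1 ≤ k) (hkn : k ≤ n) (l : Fin n → ℝ)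
    (hl : l ∈ Tset n k) : segment ℝ (fun _ => (1:ℝ)) l ⊆ Tset n k := by
  rintro x ⟨u, v, hu, hv, huv, rfl⟩
  intro j hj1 hjk
  have hform : (u • (fun _ => (1:ℝ)) + v • l) = fun i => v * l i + u := by
    funext i
    simp [Pi.add_apply, Pi.smul_apply, smul_eq_mul]
    ring
  rw [hform, esymm_affine n j (hjk.trans hkn) v u l]
  apply Finset.sum_pos'
  · intro m hm
    rw [Finset.mem_range] at hm
    have : 0 ≤ esymm n m l := by
      rcases Nat.eq_zero_or_pos m with h | h
      · subst h; rw [esymm_zero]; norm_num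
      · exact (hl m h (by omega)).le
    positivity
  · rcases eq_or_lt_of_le hv with h | h
    · refine ⟨0, Finset.mem_range.mpr (Nat.succ_pos _), ?_⟩
      have hu1 : u = 1 := by linarith
      rw [← h, hu1]
      simp [esymm_zero]
      exact_mod_cast Nat.choose_pos (hjk.trans hkn)
    · refine ⟨j, Finset.mem_range.mpr (by omega), ?_⟩
      simp only [Nat.sub_self, pow_zero, mul_one, Nat.choose_zero_right, Nat.cast_one, one_mul]
      exact mul_pos (pow_pos h j) (hl j hj1 hjk)

lemma isPreconnected_Tset (n k : ℕ) (hk1 : 1 ≤ k) (hkn : k ≤ n) :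
    IsPreconnected (Tset n k) := by
  have h : Tset n k = ⋃₀ ((fun l => segment ℝ (fun _ => (1:ℝ)) l) '' Tset n k) := by
    apply Set.Subset.antisymm
    · intro l hl
      exact ⟨segment ℝ (fun _ => (1:ℝ)) l, ⟨l, hl, rfl⟩, right_mem_segment ℝ _ _⟩
    · rintro x ⟨S, ⟨l, hl, rfl⟩, hx⟩
      exact segment_subset_Tset n k hk1 hkn l hl hx
  rw [h]
  apply isPreconnected_sUnion (fun _ => (1:ℝ))
  · rintro S ⟨l, hl, rfl⟩
    exact left_mem_segment ℝ _ _
  · rintro S ⟨l, hl, rfl⟩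
    exact (convex_segment _ _).isPreconnected

lemma one_mem_F (n k : ℕ) (hk1 : 1 ≤ k) (hkn : k ≤ n) :
    (fun _ => (1:ℝ)) ∈ {l : Fin n → ℝ | 0 < esymm n k l} := by
  simp only [Set.mem_setOf_eq, esymm_const_one n k hkn]
  exact_mod_cast Nat.choose_pos hkn

lemma Tset_subset_gardingCone (n k : ℕ) (hk1 : 1 ≤ k) (hkn : k ≤ n) :
    Tset n k ⊆ gardingCone n k := by
  apply IsPreconnected.subset_connectedComponentIn (isPreconnected_Tset n k hk1 hkn)
    (one_mem_Tset n k hkn)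
  intro l hl
  exact hl k hk1 le_rfl

lemma gardingCone_subset_Tset (n k : ℕ) (hk1 : 1 ≤ k) (hkn : k ≤ n) :
    gardingCone n k ⊆ Tset n k := by
  set F := {l : Fin n → ℝ | 0 < esymm n k l} with hF
  set Γ := gardingCone n k with hΓ
  have hΓF : Γ ⊆ F := connectedComponentIn_subset F _
  have hpre : IsPreconnected Γ := isPreconnected_connectedComponentIn
  set V : Set (Fin n → ℝ) := ⋃ j ∈ Finset.Icc 1 k, {l : Fin n → ℝ | esymm n j l < 0} with hV
  have hVopen : IsOpen V := by
    apply isOpen_biUnion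
    intro j _
    exact isOpen_lt (continuous_esymm n j) continuous_const
  have hcover : Γ ⊆ Tset n k ∪ V := by
    intro x hx
    by_cases hxV : x ∈ V
    · exact Or.inr hxV
    · left
      have hnonneg : ∀ j, j ≤ k → 0 ≤ esymm n j x := by
        intro j hj
        rcases Nat.eq_zero_or_pos j with h | h
        · subst h; rw [esymm_zero]; norm_num
        · by_contra hneg
          push_neg at hneg
          exact hxV (Set.mem_biUnion (Finset.mem_Icc.mpr ⟨h, hj⟩) hneg)
      intro j h1 h2
      exact esymm_pos_of_nonneg n k hk1 hkn x hnonneg (hΓF hx) j h2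
  have hdisj : Tset n k ∩ V = ∅ := by
    ext x
    simp only [Set.mem_inter_iff, Set.mem_empty_iff_false, iff_false, not_and]
    intro hxT hxV
    obtain ⟨j, hj, hlt⟩ := Set.mem_iUnion₂.mp hxV
    rw [Finset.mem_Icc] at hj
    exact absurd (hxT j hj.1 hj.2) (not_lt.mpr hlt.le)
  -- preconnectedness argument
  by_contra hsub
  rw [Set.not_subset] at hsub
  obtain ⟨x, hxΓ, hxT⟩ := hsub
  have hxV : x ∈ V := (hcover hxΓ).resolve_left hxT
  have h1 : (Γ ∩ (Tset n k ∩ V)).Nonempty := by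
    apply hpre (Tset n k) V (isOpen_Tset n k) hVopen hcover
    · exact ⟨fun _ => 1, mem_connectedComponentIn (one_mem_F n k hk1 hkn),
        one_mem_Tset n k hkn⟩
    · exact ⟨x, hxΓ, hxV⟩
  rw [hdisj] at h1
  simp at h1

/-- Splitting σ_k(λ) = λ_i σ_{k-1}(λ \ i) + σ_k(λ \ i). -/
lemma esymm_split (n k : ℕ) (hk : 1 ≤ k) (l : Fin n → ℝ) (i : Fin n) :
    esymm n k l = l i * esymmDel n (k - 1) l i + esymmDel n k l i := by
  classical
  rw [esymm, ← Finset.sum_filter_add_sum_filter_not _ (fun s => i ∈ s)]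
  congr 1
  · -- sets containing i
    rw [esymmDel, Finset.mul_sum]
    apply Finset.sum_bij' (fun s _ => s.erase i) (fun s _ => insert i s)
    · intro s hs
      simp only [Finset.mem_filter] at hs
      exact Finset.insert_erase hs.2
    · intro s hs
      simp only [Finset.mem_powersetCard] at hs
      exact Finset.erase_insert (fun h => (Finset.mem_erase.mp (hs.1 h)).1 rfl)
    · intro s hs
      simp only [Finset.mem_filter] at hs
      exact (Finset.mul_prod_erase s l hs.2).symm
    · intro s hs
      simp only [Finset.mem_filter, Finset.mem_powersetCard] at hs
      simp only [Finset.mem_powersetCard]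
      constructor
      · intro x hx
        rw [Finset.mem_erase] at hx ⊢
        exact ⟨hx.1, Finset.mem_univ x⟩
      · rw [Finset.card_erase_of_mem hs.2, hs.1.2]
    · intro s hs
      simp only [Finset.mem_powersetCard] at hs
      simp only [Finset.mem_filter, Finset.mem_powersetCard]
      have hi : i ∉ s := fun h => (Finset.mem_erase.mp (hs.1 h)).1 rfl
      refine ⟨⟨Finset.subset_univ _, ?_⟩, Finset.mem_insert_self i s⟩
      rw [Finset.card_insert_of_notMem hi, hs.2]
      omega
  · -- sets not containing i
    rw [esymmDel]
    apply Finset.sum_congr _ (fun _ _ => rfl)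
    ext s
    simp only [Finset.mem_filter, Finset.mem_powersetCard, Finset.subset_erase,
      Finset.subset_univ, true_and]
    tauto

lemma esymmDel_update (n m : ℕ) (l : Fin n → ℝ) (i : Fin n) (c : ℝ) :
    esymmDel n m (Function.update l i c) i = esymmDel n m l i := by
  apply Finset.sum_congr rfl
  intro s hs
  rw [Finset.mem_powersetCard] at hs
  apply Finset.prod_congr rfl
  intro j hj
  have : j ≠ i := (Finset.mem_erase.mp (hs.1 hj)).1
  simp [Function.update_apply, this]

/-- For `λ ∈ Γ_k` and every index `i`, the `(k-1)`-th elementary symmetric function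
of the tuple obtained by deleting the `i`-th entry of `λ` is strictly positive. -/
theorem esymmDel_pos_of_mem_gardingCone (n k : ℕ) (hn : 2 ≤ n) (hk1 : 1 ≤ k) (hk : k ≤ n)
    (l : Fin n → ℝ) (hl : l ∈ gardingCone n k) (i : Fin n) :
    0 < esymmDel n (k - 1) l i := by
  by_contra hneg
  push_neg at hneg
  -- the ray t ↦ update l i (l i + t), t ≤ 0, stays in the Garding cone
  set F := {l : Fin n → ℝ | 0 < esymm n k l} with hF
  have hlF : l ∈ F := connectedComponentIn_subset F _ hl
  have hlT : l ∈ Tset n k := gardingCone_subset_Tset n k hk1 hk hl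
  set D : ℝ := esymmDel n (k - 1) l i with hD
  set Dk : ℝ := esymmDel n k l i with hDk
  set r : ℝ → (Fin n → ℝ) := fun t => Function.update l i (l i + t) with hr
  have hcont : Continuous r := by
    apply continuous_pi
    intro j
    by_cases hji : j = i
    · subst hji
      have : (fun t => r t j) = fun t => l j + t := by
        funext t
        simp [hr]
      rw [this]
      exact continuous_const.add continuous_id
    · have : (fun t => r t j) = fun _ => l j := by
        funext t
        simp [hr, Function.update_apply, hji]
      rw [this]
      exact continuous_const
  have hsplit_r : ∀ t : ℝ, esymm n k (r t) = esymm n k l + t * D := by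
    intro t
    rw [esymm_split n k hk1 (r t) i, esymm_split n k hk1 l i]
    simp only [hr, Function.update_self, esymmDel_update]
    ring
  have hFray : ∀ t : ℝ, t ≤ 0 → r t ∈ F := by
    intro t ht
    have : 0 ≤ t * D := by nlinarith
    have h2 : 0 < esymm n k l := hlF
    simp only [hF, Set.mem_setOf_eq, hsplit_r t]
    linarith
  have hray_mem : ∀ t : ℝ, t ≤ 0 → r t ∈ gardingCone n k := by
    intro t ht
    have hS : IsPreconnected (r '' Set.Icc t 0) :=
      (isPreconnected_Icc).image r hcont.continuousOn
    have hr0 : r 0 = l := by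
      funext j
      simp [hr, Function.update_apply]
      intro h; subst h; rfl
    have hlS : l ∈ r '' Set.Icc t 0 := ⟨0, Set.mem_Icc.mpr ⟨ht, le_rfl⟩, hr0⟩
    have hSF : r '' Set.Icc t 0 ⊆ F := by
      rintro x ⟨u, hu, rfl⟩
      exact hFray u (Set.mem_Icc.mp hu).2
    have hsub := IsPreconnected.subset_connectedComponentIn hS hlS hSF
    have heq : gardingCone n k = connectedComponentIn F l :=
      connectedComponentIn_eq hl
    rw [heq]
    exact hsub ⟨t, Set.mem_Icc.mpr ⟨le_rfl, ht⟩, rfl⟩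
  have hsum_r : ∀ t : ℝ, esymm n 1 (r t) = esymm n 1 l + t := by
    intro t
    rw [esymm_one, esymm_one]
    have h1 : ∑ j, r t j = (l i + t) + ∑ j ∈ Finset.univ.erase i, l j := by
      rw [← Finset.add_sum_erase _ _ (Finset.mem_univ i)]
      congr 1
      · simp [hr]
      · apply Finset.sum_congr rfl
        intro j hj
        simp [hr, Function.update_apply, (Finset.mem_erase.mp hj).1]
    have h2 : ∑ j, l j = l i + ∑ j ∈ Finset.univ.erase i, l j :=
      (Finset.add_sum_erase _ _ (Finset.mem_univ i)).symm
    rw [h1, h2]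
    ring
  have h1pos : 0 < esymm n 1 l := hlT 1 le_rfl hk1
  set t0 : ℝ := -(esymm n 1 l) - 1 with ht0
  have ht0neg : t0 ≤ 0 := by linarith
  have := (gardingCone_subset_Tset n k hk1 hk (hray_mem t0 ht0neg)) 1 le_rfl hk1
  rw [hsum_r t0] at this
  linarith
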